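/- Let F be a free group with bases 𝒜 and ℬ and fix a ∈ 𝒜. Then there exists a constant C ≥ 0 such that whenever w, w', and ww' are all reduced words in ℬ and ww' is cyclically reduced in ℬ, we have o(a^{±1}, w)_𝒜 + o(a^{±1}, w')_𝒜 ≤ ⟨a^{±1}, ww'⟩_𝒜 + C. -/

import Mathlib

/-- A reduced word is cyclically reduced if its last letter is not the inverse
of its first letter. -/
def CyclRedWord {α : Type} (l : List (α × Bool)) : Prop :=
  ∀ p q, l.head? = some p → l.getLast? = some q → ¬ (q.1 = p.1 ∧ q.2 = !p.2)

/-- `o(a^{±1}, w)_𝒜`: the number of occurrences of the letter `a` or `a⁻¹` in the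
reduced `𝒜`-word of `w`. -/
def countA {α : Type} [DecidableEq α] (a : α) (w : FreeGroup α) : ℕ :=
  ((FreeGroup.toWord w).filter (fun p => p.1 = a)).length

/-- `⟨a^{±1}, w⟩_𝒜`: the number of occurrences of `a` or `a⁻¹` in the cyclic word
determined by `w` (the minimum of the letter count over all conjugates). -/
noncomputable def cyclCountA {α : Type} [DecidableEq α] (a : α) (w : FreeGroup α) : ℕ :=
  sInf {k : ℕ | ∃ z : FreeGroup α, k = countA a (z * w * z⁻¹)}

set_option linter.unusedSectionVars false

open FreeGroup List

namespace BCCProof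

variable {α β : Type} [DecidableEq α] [DecidableEq β]

def Rel (a b : α × Bool) : Prop := ¬(b.1 = a.1 ∧ b.2 = !a.2)

def IsRed (l : List (α × Bool)) : Prop := l.Chain' Rel

theorem rel_comm {a b : α × Bool} : Rel a b ↔ Rel b a := by
  unfold Rel
  constructor <;> (rintro h ⟨h1, h2⟩; exact h ⟨h1.symm, by rw [h2]; simp⟩)

theorem reduce_eq_self {l : List (α × Bool)} (h : IsRed l) : FreeGroup.reduce l = l := by
  induction l with
  | nil => rfl
  | cons x l ih =>
    have hl : IsRed l := h.tail
    rw [FreeGroup.reduce.cons, ih hl]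
    cases l with
    | nil => rfl
    | cons y t =>
      have hxy : Rel x y := List.isChain_cons_cons.mp h |>.1
      have : ¬ (x.1 = y.1 ∧ x.2 = !y.2) := by
        rintro ⟨h1, h2⟩; exact hxy ⟨h1.symm, by rw [h2]; simp⟩
      simp [this]

theorem not_chain'_decomp {R : (α × Bool) → (α × Bool) → Prop} {l : List (α × Bool)}
    (h : ¬ l.Chain' R) : ∃ L1 a b L2, l = L1 ++ a :: b :: L2 ∧ ¬ R a b := by
  induction l with
  | nil => exact absurd List.isChain_nil h
  | cons x l ih =>
    cases l with
    | nil => exact absurd (List.isChain_singleton x) h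
    | cons y t =>
      replace h : ¬ (R x y ∧ List.IsChain R (y :: t)) := fun hh => h (List.isChain_cons_cons.mpr hh)
      push_neg at h
      by_cases hxy : R x y
      · obtain ⟨L1, a, b, L2, hl, hr⟩ := ih (h hxy)
        exact ⟨x :: L1, a, b, L2, by rw [hl]; rfl, hr⟩
      · exact ⟨[], x, y, t, rfl, hxy⟩

theorem isRed_reduce (l : List (α × Bool)) : IsRed (FreeGroup.reduce l) := by
  by_contra h
  obtain ⟨L1, a, b, L2, hl, hr⟩ := not_chain'_decomp h
  unfold Rel at hr
  push_neg at hr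
  obtain ⟨h1, h2⟩ := hr
  have : b = (a.1, !a.2) := by
    cases b; cases a; simp only at h1 h2 ⊢; rw [h1, h2]
  rw [this] at hl
  exact FreeGroup.reduce.not (L₂ := L1) (L₃ := L2) (x := a.1) (b := a.2)
    (by rw [hl])

theorem isRed_toWord (x : FreeGroup α) : IsRed (toWord x) := by
  rw [← FreeGroup.reduce_toWord]; exact isRed_reduce _

theorem toWord_mk_eq {l : List (α × Bool)} (h : IsRed l) : toWord (mk l) = l := by
  rw [FreeGroup.toWord_mk, reduce_eq_self h]

theorem IsRed.infix {l l' : List (α × Bool)} (h : IsRed l) (h' : l' <:+: l) : IsRed l' :=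
  List.IsChain.infix h h'

end BCCProof

namespace BCCProof

variable {α β : Type} [DecidableEq α] [DecidableEq β]

theorem isRed_append {l1 l2 : List (α × Bool)} (h1 : IsRed l1) (h2 : IsRed l2)
    (h : ∀ p ∈ l1.getLast?, ∀ q ∈ l2.head?, Rel p q) : IsRed (l1 ++ l2) :=
  List.IsChain.append h1 h2 h

theorem toWord_mul_of_junct {p q : FreeGroup α}
    (h : ∀ x ∈ (toWord p).getLast?, ∀ y ∈ (toWord q).head?, Rel x y) :
    toWord (p * q) = toWord p ++ toWord q := by
  conv_lhs => rw [← mk_toWord (x := p), ← mk_toWord (x := q)]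
  rw [FreeGroup.mul_mk, toWord_mk_eq (isRed_append (isRed_toWord p) (isRed_toWord q) h)]

theorem isRed_invRev {l : List (α × Bool)} (h : IsRed l) : IsRed (FreeGroup.invRev l) := by
  have := isRed_reduce (FreeGroup.invRev l)
  rwa [FreeGroup.reduce_invRev, reduce_eq_self h] at this

theorem invRev_append (l1 l2 : List (α × Bool)) :
    FreeGroup.invRev (l1 ++ l2) = FreeGroup.invRev l2 ++ FreeGroup.invRev l1 := by
  simp [FreeGroup.invRev]

theorem invRev_singleton (p : α × Bool) :
    FreeGroup.invRev [p] = [(p.1, !p.2)] := by simp [FreeGroup.invRev]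

theorem head?_invRev (l : List (α × Bool)) :
    (FreeGroup.invRev l).head? = l.getLast?.map (fun p => (p.1, !p.2)) := by
  simp [FreeGroup.invRev, List.head?_reverse, List.getLast?_map]

theorem getLast?_invRev (l : List (α × Bool)) :
    (FreeGroup.invRev l).getLast? = l.head?.map (fun p => (p.1, !p.2)) := by
  simp [FreeGroup.invRev, List.getLast?_reverse, List.head?_map]

theorem mk_pair_cancel (x : α) (b : Bool) : mk [(x, b), (x, !b)] = (1 : FreeGroup α) := by
  rw [FreeGroup.one_eq_mk]
  exact Quot.sound (FreeGroup.Red.Step.cons_not (L := []))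

theorem decomp_aux : ∀ (n : ℕ) (p q : FreeGroup α), (toWord p).length = n →
    ∃ x s y, toWord p = x ++ s ∧ toWord q = FreeGroup.invRev s ++ y ∧
      toWord (p * q) = x ++ y := by
  intro n
  induction n using Nat.strong_induction_on with
  | _ n ih =>
  intro p q hn
  rcases (toWord p).eq_nil_or_concat with hp | ⟨l', ℓ, hp⟩
  · refine ⟨[], [], toWord q, by simp [hp], by simp [FreeGroup.invRev_empty], ?_⟩
    have : p = 1 := FreeGroup.toWord_eq_nil_iff.mp hp
    simp [this]
  · rw [List.concat_eq_append] at hp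
    cases hq : toWord q with
    | nil =>
      refine ⟨toWord p, [], [], by simp, by simp [FreeGroup.invRev_empty], ?_⟩
      have : q = 1 := FreeGroup.toWord_eq_nil_iff.mp hq
      simp [this]
    | cons h₀ t =>
      by_cases hrel : Rel ℓ h₀
      · refine ⟨toWord p, [], toWord q, by simp, by simp [FreeGroup.invRev_empty, hq], ?_⟩
        apply toWord_mul_of_junct
        intro x hx y hy
        rw [hp] at hx
        rw [List.getLast?_concat] at hx
        rw [hq] at hy
        simp at hx hy
        rw [hx, hy] at hrel
        exact hrel
      · have hcan : h₀ = (ℓ.1, !ℓ.2) := by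
          unfold Rel at hrel
          push_neg at hrel
          obtain ⟨h1, h2⟩ := hrel
          cases h₀; cases ℓ; simp only at h1 h2 ⊢; rw [h1, h2]
        set p₁ := mk l' with hp₁
        set q₁ := mk t with hq₁
        have hredp : IsRed (toWord p) := isRed_toWord p
        have hredq : IsRed (toWord q) := isRed_toWord q
        have htp₁ : toWord p₁ = l' := toWord_mk_eq (hredp.infix ⟨[], [ℓ], by rw [hp]; simp⟩)
        have htq₁ : toWord q₁ = t := toWord_mk_eq (by
          apply hredq.infix; rw [hq]; exact ⟨[h₀], [], by simp⟩)
        have hpp : p = p₁ * mk [ℓ] := by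
          rw [hp₁, FreeGroup.mul_mk, ← hp, mk_toWord]
        have hqq : q = mk [h₀] * q₁ := by
          rw [hq₁, FreeGroup.mul_mk, List.singleton_append, ← hq, mk_toWord]
        have hpq : p * q = p₁ * q₁ := by
          rw [hpp, hqq, mul_assoc, ← mul_assoc (mk [ℓ]), FreeGroup.mul_mk, hcan]
          have : mk [ℓ, (ℓ.1, !ℓ.2)] = (1 : FreeGroup α) := by
            have := mk_pair_cancel ℓ.1 ℓ.2
            simpa using this
          simp only [List.cons_append, List.nil_append, this, one_mul]
        have hlen : l'.length < n := by
          rw [hp] at hn; simp at hn; omega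
        obtain ⟨x, s₁, y, e1, e2, e3⟩ := ih l'.length hlen p₁ q₁ (by rw [htp₁])
        have hl' : l' = x ++ s₁ := by rw [← htp₁, e1]
        have ht : t = FreeGroup.invRev s₁ ++ y := by rw [← htq₁, e2]
        refine ⟨x, s₁ ++ [ℓ], y, ?_, ?_, ?_⟩
        · rw [hp, hl', List.append_assoc]
        · simp [hq, ht, hcan, invRev_append, invRev_singleton]
        · rw [hpq, e3]

theorem decomp (p q : FreeGroup α) :
    ∃ x s y, toWord p = x ++ s ∧ toWord q = FreeGroup.invRev s ++ y ∧
      toWord (p * q) = x ++ y :=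
  decomp_aux _ p q rfl

end BCCProof

def countA' {α : Type} [DecidableEq α] (a : α) (w : FreeGroup α) : ℕ :=
  ((FreeGroup.toWord w).filter (fun p => p.1 = a)).length

namespace BCCProof

variable {α β : Type} [DecidableEq α] [DecidableEq β]

theorem norm_def (x : FreeGroup α) : FreeGroup.norm x = (toWord x).length := rfl

theorem countA'_le_norm (a : α) (x : FreeGroup α) : countA' a x ≤ FreeGroup.norm x :=
  List.length_filter_le _ _

theorem countA'_mul_le (a : α) (x y : FreeGroup α) :
    countA' a (x * y) ≤ countA' a x + countA' a y := by
  have h := FreeGroup.toWord_mul_sublist x y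
  have h2 := (h.filter (fun p => p.1 = a)).length_le
  rwa [List.filter_append, List.length_append] at h2

theorem countA'_inv (a : α) (x : FreeGroup α) : countA' a x⁻¹ = countA' a x := by
  unfold countA'
  rw [FreeGroup.toWord_inv, FreeGroup.invRev]
  rw [List.filter_reverse, List.length_reverse, List.filter_map, List.length_map]
  congr 1

theorem norm_hom_le (f : FreeGroup β →* FreeGroup α) (M : ℕ)
    (hM : ∀ b : β, FreeGroup.norm (f (FreeGroup.of b)) ≤ M) :
    ∀ l : List (β × Bool), FreeGroup.norm (f (mk l)) ≤ M * l.length := by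
  intro l
  induction l with
  | nil =>
    have : mk ([] : List (β × Bool)) = 1 := (FreeGroup.one_eq_mk).symm
    simp [this]
  | cons p l ih =>
    have : mk (p :: l) = mk [p] * mk l := by rw [FreeGroup.mul_mk]; rfl
    rw [this, _root_.map_mul]
    calc FreeGroup.norm (f (mk [p]) * f (mk l))
        ≤ FreeGroup.norm (f (mk [p])) + FreeGroup.norm (f (mk l)) :=
          FreeGroup.norm_mul_le _ _
      _ ≤ M + M * l.length := by
          apply Nat.add_le_add _ ih
          rcases p with ⟨b, bv⟩
          cases bv
          · have : mk [(b, false)] = (FreeGroup.of b)⁻¹ := by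
              rw [FreeGroup.of, FreeGroup.inv_mk]; rfl
            rw [this, _root_.map_inv, FreeGroup.norm_inv_eq]
            exact hM b
          · exact hM b
      _ = M * (p :: l).length := by simp [List.length_cons]; ring

theorem norm_apply_le (f : FreeGroup β →* FreeGroup α) (M : ℕ)
    (hM : ∀ b : β, FreeGroup.norm (f (FreeGroup.of b)) ≤ M) (u : FreeGroup β) :
    FreeGroup.norm (f u) ≤ M * FreeGroup.norm u := by
  have := norm_hom_le f M hM (toWord u)
  rwa [FreeGroup.mk_toWord] at this

end BCCProof

namespace BCCProof

variable {α β : Type} [DecidableEq α] [DecidableEq β]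

theorem junct_of_isRed_append {l1 l2 : List (α × Bool)} (h : IsRed (l1 ++ l2)) :
    ∀ p ∈ l1.getLast?, ∀ q ∈ l2.head?, Rel p q :=
  (List.isChain_append.mp h).2.2

theorem norm_inv_mul_le (z1 z2 : FreeGroup α) :
    FreeGroup.norm (z1⁻¹ * z2) ≤ FreeGroup.norm z1 + FreeGroup.norm z2 := by
  calc FreeGroup.norm (z1⁻¹ * z2) ≤ FreeGroup.norm z1⁻¹ + FreeGroup.norm z2 :=
        FreeGroup.norm_mul_le _ _
    _ = FreeGroup.norm z1 + FreeGroup.norm z2 := by rw [FreeGroup.norm_inv_eq]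

theorem sep {z1 z2 : FreeGroup α} {ε₀ : α × Bool}
    (h1 : (toWord z1).head? ≠ some ε₀) (h2 : (toWord z2).head? = some ε₀) :
    FreeGroup.norm z2 ≤ FreeGroup.norm (z1⁻¹ * z2) := by
  have hmul : z1⁻¹ * z2 = mk (FreeGroup.invRev (toWord z1) ++ toWord z2) := by
    conv_lhs => rw [← mk_toWord (x := z1), ← mk_toWord (x := z2)]
    rw [FreeGroup.inv_mk, FreeGroup.mul_mk]
  have hred : IsRed (FreeGroup.invRev (toWord z1) ++ toWord z2) := by
    apply isRed_append (isRed_invRev (isRed_toWord z1)) (isRed_toWord z2)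
    intro p hp q hq
    rw [getLast?_invRev] at hp
    cases hl1 : (toWord z1).head? with
    | none => rw [hl1] at hp; simp at hp
    | some μ =>
      rw [hl1] at hp
      simp at hp
      have hq' : q = ε₀ := by rw [h2] at hq; simp at hq; exact hq.symm
      rintro ⟨ha, hb⟩
      apply h1
      rw [hl1]
      have : μ = ε₀ := by
        rw [hq'] at ha hb
        rw [← hp] at ha hb
        simp at ha hb
        cases μ; cases ε₀
        simp only at ha hb ⊢
        rw [ha, ← hb]
      rw [this]
  rw [hmul, norm_def, norm_def, toWord_mk_eq hred, List.length_append]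
  omega

theorem bcc_main (e : FreeGroup β ≃* FreeGroup α) (K M : ℕ)
    (hM : ∀ z : FreeGroup β, FreeGroup.norm (e z) ≤ M * FreeGroup.norm z)
    (hK : ∀ z : FreeGroup α, FreeGroup.norm (e.symm z) ≤ K * FreeGroup.norm z)
    (u v : FreeGroup β)
    (huv : FreeGroup.norm u + FreeGroup.norm v = FreeGroup.norm (u * v)) :
    ∃ x s y, toWord (e u) = x ++ s ∧ toWord (e v) = FreeGroup.invRev s ++ y ∧
      toWord (e u * e v) = x ++ y ∧ s.length ≤ M + 2 * K * M * M := by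
  classical
  obtain ⟨x, s, y, hx, hy, hxy⟩ := decomp (e u) (e v)
  refine ⟨x, s, y, hx, hy, hxy, ?_⟩
  cases hs : s with
  | nil => simp
  | cons ε₀ s' =>
  subst hs
  set L := toWord u ++ toWord v with hL
  set n := L.length with hn
  set k := (toWord u).length with hk
  have hkn : k ≤ n := by rw [hn, hL, List.length_append]; omega
  have htwL : toWord (u * v) = FreeGroup.reduce L := by
    conv_lhs => rw [← mk_toWord (x := u), ← mk_toWord (x := v)]
    rw [FreeGroup.mul_mk, FreeGroup.toWord_mk]
  have hLred : IsRed L := by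
    have hsub : FreeGroup.reduce L <+ L := FreeGroup.Red.sublist FreeGroup.reduce.red
    have hlen : (FreeGroup.reduce L).length = L.length := by
      rw [← htwL, hL, List.length_append]
      rw [norm_def, norm_def, norm_def] at huv
      omega
    have : FreeGroup.reduce L = L := hsub.eq_of_length hlen
    rw [← this]
    exact isRed_reduce L
  have hmkL : u * v = mk L := by
    rw [hL, ← FreeGroup.mul_mk, mk_toWord, mk_toWord]
  -- slices
  have hslice_red : ∀ i j : ℕ, IsRed ((L.take j).drop i) := by
    intro i j
    exact hLred.infix (((L.take j).drop_suffix i).isInfix.trans (L.take_prefix j).isInfix)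
  have htake : ∀ i j : ℕ, i ≤ j →
      (mk (L.take i))⁻¹ * mk (L.take j) = mk ((L.take j).drop i) := by
    intro i j hij
    have h1 : L.take i = (L.take j).take i := by
      rw [List.take_take, Nat.min_eq_left hij]
    have h2 : mk (L.take j) = mk (L.take i) * mk ((L.take j).drop i) := by
      rw [FreeGroup.mul_mk, h1, List.take_append_drop]
    rw [h2, inv_mul_cancel_left]
  set h : ℕ → FreeGroup α := fun i => (mk x)⁻¹ * e (mk (L.take i)) with hdefh
  have hdiff : ∀ i j : ℕ, i ≤ j → (h i)⁻¹ * h j = e (mk ((L.take j).drop i)) := by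
    intro i j hij
    have hgrp : (h i)⁻¹ * h j = (e (mk (L.take i)))⁻¹ * e (mk (L.take j)) := by
      rw [hdefh]; simp only; group
    rw [hgrp, ← _root_.map_inv, ← _root_.map_mul, htake i j hij]
  have hup : ∀ i j : ℕ, i ≤ j → FreeGroup.norm ((h i)⁻¹ * h j) ≤ M * (j - i) := by
    intro i j hij
    rw [hdiff i j hij]
    calc FreeGroup.norm (e (mk ((L.take j).drop i)))
        ≤ M * FreeGroup.norm (mk ((L.take j).drop i)) := hM _
      _ ≤ M * ((L.take j).drop i).length :=
          Nat.mul_le_mul_left M (FreeGroup.norm_mk_le)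
      _ ≤ M * (j - i) := by
          apply Nat.mul_le_mul_left
          rw [List.length_drop, List.length_take]
          omega
  have hdown : ∀ i j : ℕ, i ≤ j → j ≤ n → j - i ≤ K * FreeGroup.norm ((h i)⁻¹ * h j) := by
    intro i j hij hjn
    rw [hdiff i j hij]
    have hlen : ((L.take j).drop i).length = j - i := by
      rw [List.length_drop, List.length_take]
      omega
    have : FreeGroup.norm (mk ((L.take j).drop i)) = j - i := by
      rw [norm_def, toWord_mk_eq (hslice_red i j), hlen]
    calc j - i = FreeGroup.norm (e.symm (e (mk ((L.take j).drop i)))) := by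
          rw [MulEquiv.symm_apply_apply, this]
      _ ≤ K * FreeGroup.norm (e (mk ((L.take j).drop i))) := hK _
  -- key words
  have heu : e u = mk x * mk (ε₀ :: s') := by
    rw [FreeGroup.mul_mk, ← hx, mk_toWord]
  have hk_word : toWord (h k) = ε₀ :: s' := by
    have h1 : L.take k = toWord u := by rw [hL, hk, List.take_left]
    have : h k = mk (ε₀ :: s') := by
      rw [hdefh]
      simp only
      rw [h1, mk_toWord, heu, inv_mul_cancel_left]
    rw [this]
    exact toWord_mk_eq ((isRed_toWord (e u)).infix (by rw [hx]; exact ⟨x, [], by simp⟩))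
  have h0_word : toWord (h 0) = FreeGroup.invRev x := by
    have : h 0 = mk (FreeGroup.invRev x) := by
      rw [hdefh]
      simp only [List.take_zero]
      rw [← FreeGroup.one_eq_mk, _root_.map_one, mul_one, FreeGroup.inv_mk]
    rw [this]
    exact toWord_mk_eq (isRed_invRev ((isRed_toWord (e u)).infix (by rw [hx]; exact ⟨[], ε₀ :: s', by simp⟩)))
  have hn_word : toWord (h n) = y := by
    have h1 : L.take n = L := by rw [hn, List.take_length]
    have h2 : e (mk L) = mk x * mk y := by
      rw [← hmkL, _root_.map_mul, FreeGroup.mul_mk, ← hxy, mk_toWord]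
    have : h n = mk y := by
      rw [hdefh]
      simp only
      rw [h1, h2, inv_mul_cancel_left]
    rw [this]
    exact toWord_mk_eq ((isRed_toWord (e u * e v)).infix (by rw [hxy]; exact ⟨x, [], by simp⟩))
  -- the Bad predicate
  set Bad : ℕ → Prop := fun m => (toWord (h m)).head? ≠ some ε₀ with hBdef
  have hBad0 : Bad 0 := by
    rw [hBdef]
    simp only
    rw [h0_word, head?_invRev]
    cases hxl : x.getLast? with
    | none => simp
    | some ξ =>
      simp only [Option.map_some]
      intro hcon
      have hrel : Rel ξ ε₀ := by
        have hj := junct_of_isRed_append (l1 := x) (l2 := ε₀ :: s') (by rw [← hx]; exact isRed_toWord (e u))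
        exact hj ξ (by rw [hxl]; rfl) ε₀ rfl
      apply hrel
      have : (ξ.1, !ξ.2) = ε₀ := by injection hcon
      constructor
      · rw [← this]
      · rw [← this]
  have hBadn : Bad n := by
    rw [hBdef]
    simp only
    rw [hn_word]
    cases hyl : y with
    | nil => simp
    | cons η y' =>
      simp only [List.head?_cons]
      intro hcon
      have hη : η = ε₀ := by injection hcon
      have hj := junct_of_isRed_append (l1 := FreeGroup.invRev (ε₀ :: s')) (l2 := y)
        (by rw [← hy]; exact isRed_toWord (e v))
      have hlast : (FreeGroup.invRev (ε₀ :: s')).getLast? = some (ε₀.1, !ε₀.2) := by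
        rw [getLast?_invRev]; rfl
      have hrel := hj (ε₀.1, !ε₀.2) (by rw [hlast]; rfl) η (by rw [hyl]; rfl)
      apply hrel
      rw [hη]
      simp
  have hnotBadk : ¬ Bad k := by
    rw [hBdef]
    simp only [Ne, not_not]
    rw [hk_word]
    rfl
  -- choose indices
  set i := Nat.findGreatest Bad k with hidef
  have hik : i ≤ k := Nat.findGreatest_le k
  have hBadi : Bad i := Nat.findGreatest_spec (Nat.zero_le k) hBad0
  have hilt : i < k := lt_of_le_of_ne hik (fun hcon => hnotBadk (hcon ▸ hBadi))
  have hgreat : ∀ m, i < m → m ≤ k → ¬Bad m := fun m h1 h2 =>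
    Nat.findGreatest_is_greatest h1 h2
  have hex : ∃ d, Bad (k + d) := ⟨n - k, by rwa [Nat.add_sub_cancel' hkn]⟩
  set j := k + Nat.find hex with hjdef
  have hBadj : Bad j := Nat.find_spec hex
  have hjn : j ≤ n := by
    have h1 : Nat.find hex ≤ n - k := Nat.find_min' hex (by rwa [Nat.add_sub_cancel' hkn])
    omega
  have hkj : k < j := by
    rcases Nat.eq_zero_or_pos (Nat.find hex) with h0 | h0
    · exfalso; apply hnotBadk; have := hBadj; rwa [hjdef, h0, Nat.add_zero] at this
    · omega
  have hmin : ∀ m, k ≤ m → m < j → ¬Bad m := by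
    intro m h1 h2 hbad
    have : Bad (k + (m - k)) := by rwa [Nat.add_sub_cancel' h1]
    have := Nat.find_min' hex this
    omega
  -- distance bounds
  have hD1 : FreeGroup.norm (h (i + 1)) ≤ M := by
    have hnb : ¬Bad (i + 1) := hgreat (i + 1) (Nat.lt_succ_self i) hilt
    rw [hBdef] at hnb
    simp only [Ne, not_not] at hnb
    calc FreeGroup.norm (h (i + 1)) ≤ FreeGroup.norm ((h i)⁻¹ * h (i + 1)) :=
          sep hBadi hnb
      _ ≤ M * ((i + 1) - i) := hup i (i + 1) (Nat.le_succ i)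
      _ = M := by
          have h1 : i + 1 - i = 1 := by omega
          rw [h1, Nat.mul_one]
  have hD2 : FreeGroup.norm (h (j - 1)) ≤ M := by
    have hnb : ¬Bad (j - 1) := hmin (j - 1) (by omega) (by omega)
    rw [hBdef] at hnb
    simp only [Ne, not_not] at hnb
    have hswap : FreeGroup.norm ((h j)⁻¹ * h (j - 1)) =
        FreeGroup.norm ((h (j - 1))⁻¹ * h j) := by
      have hg : (h j)⁻¹ * h (j - 1) = ((h (j - 1))⁻¹ * h j)⁻¹ := by group
      rw [hg, FreeGroup.norm_inv_eq]
    calc FreeGroup.norm (h (j - 1)) ≤ FreeGroup.norm ((h j)⁻¹ * h (j - 1)) :=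
          sep hBadj hnb
      _ = FreeGroup.norm ((h (j - 1))⁻¹ * h j) := hswap
      _ ≤ M * (j - (j - 1)) := hup (j - 1) j (by omega)
      _ ≤ M := by have : j - (j - 1) = 1 := by omega
                  rw [this, Nat.mul_one]
  have hgap : (j - 1) - (i + 1) ≤ K * (M + M) := by
    have h1 : i + 1 ≤ j - 1 := by omega
    calc (j - 1) - (i + 1) ≤ K * FreeGroup.norm ((h (i + 1))⁻¹ * h (j - 1)) :=
          hdown (i + 1) (j - 1) h1 (by omega)
      _ ≤ K * (FreeGroup.norm (h (i + 1)) + FreeGroup.norm (h (j - 1))) :=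
          Nat.mul_le_mul_left K (norm_inv_mul_le _ _)
      _ ≤ K * (M + M) := Nat.mul_le_mul_left K (Nat.add_le_add hD1 hD2)
  -- conclude
  have hcval : (ε₀ :: s').length = FreeGroup.norm (h k) := by
    rw [norm_def, hk_word]
  have hsplit : h k = h (i + 1) * ((h (i + 1))⁻¹ * h k) := by group
  have hfin : FreeGroup.norm (h k) ≤ M + M * (k - (i + 1)) := by
    have h1 : FreeGroup.norm (h k) ≤
        FreeGroup.norm (h (i + 1)) + FreeGroup.norm ((h (i + 1))⁻¹ * h k) := by
      conv_lhs => rw [hsplit]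
      exact FreeGroup.norm_mul_le _ _
    exact le_trans h1 (Nat.add_le_add hD1 (hup (i + 1) k hilt))
  have hki : k - (i + 1) ≤ K * (M + M) := le_trans (by omega) hgap
  have : M * (k - (i + 1)) ≤ M * (K * (M + M)) := Nat.mul_le_mul_left M hki
  have hfinal : (ε₀ :: s').length ≤ M + M * (K * (M + M)) := by
    rw [hcval]; omega
  calc (ε₀ :: s').length ≤ M + M * (K * (M + M)) := hfinal
    _ = M + 2 * K * M * M := by ring

end BCCProof

def CyclRedWord' {α : Type} (l : List (α × Bool)) : Prop :=
  ∀ p q, l.head? = some p → l.getLast? = some q → ¬ (q.1 = p.1 ∧ q.2 = !p.2)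

namespace BCCProof

variable {α β : Type} [DecidableEq α] [DecidableEq β]

theorem cancel_symm {a b : α × Bool} : (b.1 = a.1 ∧ b.2 = !a.2) ↔ (a.1 = b.1 ∧ a.2 = !b.2) := by
  constructor <;> (rintro ⟨h1, h2⟩; exact ⟨h1.symm, by rw [h2]; simp⟩)

/-- If `c`'s word is cyclically reduced, multiplying `c` with anything whose word starts with
the head of `c`'s word concatenates without cancellation. -/
theorem toWord_cyclred_mul {c z : FreeGroup α} (hc : CyclRedWord' (toWord c))
    (hz : (toWord z).head? = (toWord c).head? ∨ z = 1) :
    toWord (c * z) = toWord c ++ toWord z := by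
  apply toWord_mul_of_junct
  intro p hp q hq
  rcases hz with hz | rfl
  · rw [hz] at hq
    intro hcon
    exact hc q p hq hp (cancel_symm.mp hcon)
  · rw [FreeGroup.toWord_one] at hq
    simp at hq

theorem toWord_pow_cyclred (c : FreeGroup α) (hc : CyclRedWord' (toWord c)) :
    ∀ m : ℕ, toWord (c ^ (m + 1)) = toWord c ++ toWord (c ^ m) := by
  intro m
  induction m with
  | zero => simp [pow_succ, pow_zero]
  | succ m ih =>
    have hpow : c ^ (m + 1 + 1) = c * c ^ (m + 1) := by rw [pow_succ']
    rw [hpow]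
    apply toWord_cyclred_mul hc
    cases hcw : toWord c with
    | nil =>
      right
      have : c = 1 := FreeGroup.toWord_eq_nil_iff.mp hcw
      simp [this]
    | cons p t =>
      left
      rw [ih, hcw]
      rfl

theorem countA'_pow_cyclred (a : α) (c : FreeGroup α) (hc : CyclRedWord' (toWord c)) :
    ∀ n : ℕ, countA' a (c ^ n) = n * countA' a c := by
  intro n
  induction n with
  | zero => simp [countA', FreeGroup.toWord_one]
  | succ n ih =>
    unfold countA' at *
    rw [toWord_pow_cyclred c hc n, List.filter_append, List.length_append, ih]
    ring

theorem countA'_pow_le (a : α) (x : FreeGroup α) (n : ℕ) :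
    countA' a (x ^ n) ≤ n * countA' a x := by
  induction n with
  | zero => simp [countA', FreeGroup.toWord_one]
  | succ n ih =>
    rw [pow_succ]
    calc countA' a (x ^ n * x) ≤ countA' a (x ^ n) + countA' a x := countA'_mul_le _ _ _
      _ ≤ n * countA' a x + countA' a x := Nat.add_le_add_right ih _
      _ = (n + 1) * countA' a x := by ring

theorem countA'_conj_ge (a : α) (c y : FreeGroup α) (hc : CyclRedWord' (toWord c)) :
    countA' a c ≤ countA' a (y * c * y⁻¹) := by
  set h := y * c * y⁻¹ with hh
  have key : ∀ n : ℕ, n * countA' a c ≤ 2 * countA' a y + n * countA' a h := by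
    intro n
    have hcn : c ^ n = y⁻¹ * h ^ n * y := by
      rw [hh, conj_pow]
      group
    have h1 : countA' a (c ^ n) ≤ 2 * countA' a y + countA' a (h ^ n) := by
      rw [hcn]
      calc countA' a (y⁻¹ * h ^ n * y)
          ≤ countA' a (y⁻¹ * h ^ n) + countA' a y := countA'_mul_le _ _ _
        _ ≤ countA' a y⁻¹ + countA' a (h ^ n) + countA' a y :=
            Nat.add_le_add_right (countA'_mul_le _ _ _) _
        _ = 2 * countA' a y + countA' a (h ^ n) := by rw [countA'_inv]; ring
    rw [countA'_pow_cyclred a c hc n] at h1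
    calc n * countA' a c ≤ 2 * countA' a y + countA' a (h ^ n) := h1
      _ ≤ 2 * countA' a y + n * countA' a h := Nat.add_le_add_left (countA'_pow_le a h n) _
  by_contra hcon
  push_neg at hcon
  set n := 2 * countA' a y + 1 with hn
  have h2 : n * (countA' a h + 1) ≤ n * countA' a c := Nat.mul_le_mul_left n hcon
  have h3 := key n
  have h4 : n * (countA' a h + 1) = n * countA' a h + n := by ring
  omega

/-- Cyclic reduction: every element is a conjugate of a cyclically reduced element. -/
theorem core_aux : ∀ (N : ℕ) (g : FreeGroup α), FreeGroup.norm g = N →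
    ∃ s c : FreeGroup α, g = s * c * s⁻¹ ∧ CyclRedWord' (toWord c) ∧
      FreeGroup.norm c + 2 * FreeGroup.norm s ≤ FreeGroup.norm g := by
  intro N
  induction N using Nat.strong_induction_on with
  | _ N ih =>
  intro g hN
  by_cases hg : CyclRedWord' (toWord g)
  · exact ⟨1, g, by group, hg, by rw [FreeGroup.norm_one]; omega⟩
  · unfold CyclRedWord' at hg
    push_neg at hg
    obtain ⟨p, q, hp, hq, h1, h2⟩ := hg
    cases hl : toWord g with
    | nil => rw [hl] at hp; simp at hp
    | cons p' t =>
      have hpp : p' = p := by rw [hl] at hp; simpa using hp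
      rw [hpp] at hl
      rcases t.eq_nil_or_concat with ht | ⟨mid, q', ht⟩
      · exfalso
        rw [hl, ht] at hq
        have hpq : p = q := by simpa using hq
        rw [← hpq] at h2
        simp at h2
      · rw [List.concat_eq_append] at ht
        have hqq : q' = q := by
          rw [hl, ht] at hq
          have : (p :: (mid ++ [q'])) = (p :: mid) ++ [q'] := by simp
          rw [this, List.getLast?_concat] at hq
          simpa using hq
        subst hqq
        have hqval : q' = (p.1, !p.2) := by
          cases q'; cases p; simp only at h1 h2 ⊢; rw [h1, h2]
        set g' := mk mid with hg'def
        have htg' : toWord g' = mid :=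
          toWord_mk_eq ((isRed_toWord g).infix (by rw [hl, ht]; exact ⟨[p], [q'], by simp⟩))
        have hinv : mk [q'] = (mk [p])⁻¹ := by
          rw [FreeGroup.inv_mk, invRev_singleton, hqval]
        have hgdec : g = mk [p] * g' * (mk [p])⁻¹ := by
          conv_lhs => rw [← mk_toWord (x := g), hl, ht]
          rw [hg'def, ← hinv, FreeGroup.mul_mk, FreeGroup.mul_mk]
          congr 1
        have hng' : FreeGroup.norm g' = mid.length := by rw [norm_def, htg']
        have hng : FreeGroup.norm g = mid.length + 2 := by
          rw [norm_def, hl, ht]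
          simp
        obtain ⟨s', c, hdec, hcyc, hbound⟩ := ih mid.length (by omega) g' hng'
        refine ⟨mk [p] * s', c, ?_, hcyc, ?_⟩
        · rw [hgdec, hdec]
          group
        · have hns : FreeGroup.norm (mk [p] * s') ≤ 1 + FreeGroup.norm s' := by
            calc FreeGroup.norm (mk [p] * s')
                ≤ FreeGroup.norm (mk [p]) + FreeGroup.norm s' := FreeGroup.norm_mul_le _ _
              _ ≤ 1 + FreeGroup.norm s' := by
                  have : FreeGroup.norm (mk [p]) ≤ 1 := FreeGroup.norm_mk_le
                  omega
          omega

end BCCProof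

/-- There is `C ≥ 0` such that whenever the `ℬ`-words of `w`, `w'` concatenate without
cancellation and `w w'` is cyclically reduced in `ℬ`, the `𝒜`-letter counts satisfy
`o(a^{±1}, w)_𝒜 + o(a^{±1}, w')_𝒜 ≤ ⟨a^{±1}, w w'⟩_𝒜 + C`. -/
theorem stmt8 {α β : Type} [Fintype α] [Fintype β] [DecidableEq α] [DecidableEq β]
    (e : FreeGroup β ≃* FreeGroup α) (a : α) :
    ∃ C : ℕ, ∀ w w' : FreeGroup α,
      (FreeGroup.toWord (e.symm w)).length + (FreeGroup.toWord (e.symm w')).length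
          = (FreeGroup.toWord (e.symm (w * w'))).length →
      CyclRedWord (FreeGroup.toWord (e.symm (w * w'))) →
      countA a w + countA a w' ≤ cyclCountA a (w * w') + C := by
  classical
  open BCCProof in
  obtain ⟨M, hMb⟩ : ∃ M : ℕ, ∀ b : β, FreeGroup.norm (e (FreeGroup.of b)) ≤ M :=
    ⟨(Finset.univ : Finset β).sup (fun b => FreeGroup.norm (e (FreeGroup.of b))),
      fun b => Finset.le_sup (f := fun b => FreeGroup.norm (e (FreeGroup.of b))) (Finset.mem_univ b)⟩
  obtain ⟨K, hKb⟩ : ∃ K : ℕ, ∀ t : α, FreeGroup.norm (e.symm (FreeGroup.of t)) ≤ K :=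
    ⟨(Finset.univ : Finset α).sup (fun t => FreeGroup.norm (e.symm (FreeGroup.of t))),
      fun t => Finset.le_sup (f := fun t => FreeGroup.norm (e.symm (FreeGroup.of t))) (Finset.mem_univ t)⟩
  have hM : ∀ z : FreeGroup β, FreeGroup.norm (e z) ≤ M * FreeGroup.norm z := by
    intro z
    have := norm_apply_le (e : FreeGroup β →* FreeGroup α) M
      (fun b => by simpa using hMb b) z
    simpa using this
  have hK : ∀ z : FreeGroup α, FreeGroup.norm (e.symm z) ≤ K * FreeGroup.norm z := by
    intro z
    have := norm_apply_le (e.symm : FreeGroup α →* FreeGroup β) K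
      (fun t => by simpa using hKb t) z
    simpa using this
  set C₁ := M + 2 * K * M * M with hC₁def
  refine ⟨4 * C₁, ?_⟩
  intro w w' hlen hcyc
  have hccc : ∀ b : FreeGroup α, countA a b = countA' a b := fun _ => rfl
  set u := e.symm w with hu
  set v := e.symm w' with hv
  have heu : e u = w := e.apply_symm_apply w
  have hev : e v = w' := e.apply_symm_apply w'
  have hsymm_mul : e.symm (w * w') = u * v := map_mul e.symm w w'
  have huv : FreeGroup.norm u + FreeGroup.norm v = FreeGroup.norm (u * v) := by
    rw [hsymm_mul] at hlen
    exact hlen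
  obtain ⟨x, s, y, hx, hy, hxy, hslen⟩ := bcc_main e K M hM hK u v huv
  -- first inequality: countA w + countA w' ≤ countA (w w') + 2 C₁
  have hww : FreeGroup.toWord w = x ++ s := by rw [← heu]; exact hx
  have hww' : FreeGroup.toWord w' = FreeGroup.invRev s ++ y := by rw [← hev]; exact hy
  have hmulw : FreeGroup.toWord (w * w') = x ++ y := by rw [← heu, ← hev]; exact hxy
  have hcount1 : countA a w + countA a w' ≤ countA a (w * w') + 2 * C₁ := by
    unfold countA
    rw [hww, hww', hmulw, List.filter_append, List.filter_append, List.filter_append,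
      List.length_append, List.length_append, List.length_append]
    have l1 : (s.filter (fun p => p.1 = a)).length ≤ s.length := List.length_filter_le _ _
    have l2 : ((FreeGroup.invRev s).filter (fun p => p.1 = a)).length ≤ s.length := by
      have h := List.length_filter_le (fun p => decide (p.1 = a)) (FreeGroup.invRev s)
      rw [FreeGroup.invRev_length] at h
      exact h
    omega
  -- second: cyclic reduction
  set g := w * w' with hg
  set ug := e.symm g with hug
  have hcyc' : CyclRedWord' (FreeGroup.toWord ug) := hcyc
  have heg : e ug = g := e.apply_symm_apply g
  have hguu : FreeGroup.norm ug + FreeGroup.norm ug = FreeGroup.norm (ug * ug) := by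
    have h1 : FreeGroup.toWord (ug * ug) = FreeGroup.toWord ug ++ FreeGroup.toWord ug :=
      toWord_cyclred_mul hcyc' (Or.inl rfl)
    rw [norm_def, norm_def, h1, List.length_append]
  obtain ⟨x₂, s₂, y₂, hx₂, hy₂, hxy₂, hslen₂⟩ := bcc_main e K M hM hK ug ug hguu
  have hng1 : FreeGroup.norm g = x₂.length + s₂.length := by
    rw [norm_def, ← heg, hx₂, List.length_append]
  have hng2 : FreeGroup.norm g = s₂.length + y₂.length := by
    rw [norm_def, ← heg, hy₂, List.length_append, FreeGroup.invRev_length]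
  have hngg : FreeGroup.norm (g * g) = x₂.length + y₂.length := by
    rw [norm_def, ← heg, hxy₂, List.length_append]
  have h2g : 2 * FreeGroup.norm g ≤ FreeGroup.norm (g * g) + 2 * C₁ := by omega
  obtain ⟨s₀, c₀, hdec, hcyc₀, hbound⟩ := core_aux (FreeGroup.norm g) g rfl
  have hgg2 : FreeGroup.norm (g * g) ≤ 2 * FreeGroup.norm s₀ + 2 * FreeGroup.norm c₀ := by
    have hgid : g * g = s₀ * (c₀ * c₀) * s₀⁻¹ := by rw [hdec]; group
    rw [hgid]
    calc FreeGroup.norm (s₀ * (c₀ * c₀) * s₀⁻¹)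
        ≤ FreeGroup.norm (s₀ * (c₀ * c₀)) + FreeGroup.norm s₀⁻¹ := FreeGroup.norm_mul_le _ _
      _ ≤ FreeGroup.norm s₀ + FreeGroup.norm (c₀ * c₀) + FreeGroup.norm s₀⁻¹ :=
          Nat.add_le_add_right (FreeGroup.norm_mul_le _ _) _
      _ ≤ FreeGroup.norm s₀ + (FreeGroup.norm c₀ + FreeGroup.norm c₀) + FreeGroup.norm s₀ := by
          rw [FreeGroup.norm_inv_eq]
          exact Nat.add_le_add_right (Nat.add_le_add_left (FreeGroup.norm_mul_le _ _) _) _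
      _ = 2 * FreeGroup.norm s₀ + 2 * FreeGroup.norm c₀ := by ring
  have hs₀ : FreeGroup.norm s₀ ≤ C₁ := by omega
  have hcg : countA a g ≤ countA a c₀ + 2 * C₁ := by
    rw [hccc, hccc, hdec]
    calc countA' a (s₀ * c₀ * s₀⁻¹)
        ≤ countA' a (s₀ * c₀) + countA' a s₀⁻¹ := countA'_mul_le _ _ _
      _ ≤ countA' a s₀ + countA' a c₀ + countA' a s₀⁻¹ :=
          Nat.add_le_add_right (countA'_mul_le _ _ _) _
      _ ≤ FreeGroup.norm s₀ + countA' a c₀ + FreeGroup.norm s₀ := by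
          rw [countA'_inv]
          have := countA'_le_norm a s₀
          omega
      _ ≤ countA' a c₀ + 2 * C₁ := by omega
  have hcyclo : countA a c₀ ≤ cyclCountA a g := by
    apply le_csInf
    · exact ⟨countA a g, 1, by simp⟩
    · rintro k ⟨z, hk⟩
      subst hk
      have hzg : z * g * z⁻¹ = (z * s₀) * c₀ * (z * s₀)⁻¹ := by rw [hdec]; group
      rw [hzg, hccc, hccc]
      exact countA'_conj_ge a c₀ (z * s₀) hcyc₀
  omega
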